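/- A nonnegative combination of monotone set functions sharing a common submodular order π, composed with intersections with fixed subsets of a tail part of the ground set, is monotone with the same submodular order. Precisely: given a ground set M = M₁ ⊔ M₂, monotone functions {f_j}_{j∈J} each having submodular order π, nonnegative weights λ_j, and subsets X_j ⊆ M₂, the function f₀(A ∪ B) := Σ_j λ_j f_j(A ∪ (X_j ∩ B)) for A ⊆ M₁, B ⊆ M₂ is monotone and has submodular order π. -/
import Mathlib


/-- `π`-submodular order for a set function, where the order is the linear order on `α`:
for π-nested sets `B ⊆ A` (every element of `A \ B` succeeds every element of `B`)
and `C` succeeding `A`, marginals satisfy `f(C|A) ≤ f(C|B)`. -/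
def SubmodularOrder {α : Type*} [LinearOrder α] [DecidableEq α] (f : Finset α → ℝ) : Prop :=
  ∀ A B C : Finset α, B ⊆ A →
    (∀ x ∈ A \ B, ∀ y ∈ B, y < x) →
    (∀ c ∈ C, ∀ x ∈ A, x < c) →
    f (C ∪ A) - f A ≤ f (C ∪ B) - f B

/-- a nonnegative combination of monotone functions with common submodular
order `π`, composed with intersection with fixed subsets `X j ⊆ M₂` of the tail part `M₂`
of the ground set `M = M₁ ⊔ M₂`, is monotone with the same submodular order. The function
`f₀` satisfies `f₀(A ∪ B) = Σ_j λ_j f_j (A ∪ (X_j ∩ B))` for `A ⊆ M₁`, `B ⊆ M₂`. -/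
theorem stmt_2 {α : Type*} [LinearOrder α] [Fintype α] [DecidableEq α]
    {J : Type*} [Fintype J]
    (M₁ M₂ : Finset α) (hdisj : Disjoint M₁ M₂) (hcover : M₁ ∪ M₂ = Finset.univ)
    (htail : ∀ x ∈ M₂, ∀ y ∈ M₁, y < x)
    (f : J → Finset α → ℝ)
    (hmono : ∀ j, ∀ S₁ S₂ : Finset α, S₁ ⊆ S₂ → f j S₁ ≤ f j S₂)
    (hso : ∀ j, SubmodularOrder (f j))
    (lam : J → ℝ) (hlam : ∀ j, 0 ≤ lam j)
    (X : J → Finset α) (hX : ∀ j, X j ⊆ M₂)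
    (f₀ : Finset α → ℝ)
    (hf₀ : ∀ A B : Finset α, A ⊆ M₁ → B ⊆ M₂ →
      f₀ (A ∪ B) = ∑ j, lam j * f j (A ∪ (X j ∩ B))) :
    (∀ S₁ S₂ : Finset α, S₁ ⊆ S₂ → f₀ S₁ ≤ f₀ S₂) ∧ SubmodularOrder f₀ := by
  -- Key representation: f₀ S = Σ_j lam j * f j ((M₁ ∪ X j) ∩ S) for every S.
  have key : ∀ S : Finset α, f₀ S = ∑ j, lam j * f j ((M₁ ∪ X j) ∩ S) := by
    intro S
    have h1 : (S ∩ M₁) ∪ (S ∩ M₂) = S := by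
      rw [← Finset.inter_union_distrib_left, hcover, Finset.inter_univ]
    have h2 := hf₀ (S ∩ M₁) (S ∩ M₂) Finset.inter_subset_right Finset.inter_subset_right
    rw [h1] at h2
    rw [h2]
    apply Finset.sum_congr rfl
    intro j _
    congr 1
    congr 1
    have hXj : X j ∩ (S ∩ M₂) = X j ∩ S := by
      ext x
      simp only [Finset.mem_inter]
      exact ⟨fun ⟨hx, hs, _⟩ => ⟨hx, hs⟩, fun ⟨hx, hs⟩ => ⟨hx, hs, hX j hx⟩⟩
    rw [hXj, Finset.union_inter_distrib_right, Finset.inter_comm S M₁]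
  constructor
  · intro S₁ S₂ hsub
    rw [key S₁, key S₂]
    apply Finset.sum_le_sum
    intro j _
    exact mul_le_mul_of_nonneg_left
      (hmono j _ _ (Finset.inter_subset_inter_left hsub)) (hlam j)
  · intro A B C hBA hnest hsucc
    rw [key (C ∪ A), key A, key (C ∪ B), key B]
    rw [← Finset.sum_sub_distrib, ← Finset.sum_sub_distrib]
    apply Finset.sum_le_sum
    intro j _
    rw [← mul_sub, ← mul_sub]
    apply mul_le_mul_of_nonneg_left _ (hlam j)
    set Y := M₁ ∪ X j with hY
    have h1 : Y ∩ (C ∪ A) = (Y ∩ C) ∪ (Y ∩ A) := Finset.inter_union_distrib_left Y C A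
    have h2 : Y ∩ (C ∪ B) = (Y ∩ C) ∪ (Y ∩ B) := Finset.inter_union_distrib_left Y C B
    rw [h1, h2]
    apply hso j (Y ∩ A) (Y ∩ B) (Y ∩ C)
    · exact Finset.inter_subset_inter_left hBA
    · intro x hx y hy
      simp only [Finset.mem_sdiff, Finset.mem_inter] at hx hy
      exact hnest x (Finset.mem_sdiff.mpr ⟨hx.1.2, fun hb => hx.2 ⟨hx.1.1, hb⟩⟩) y hy.2
    · intro c hc x hx
      simp only [Finset.mem_inter] at hc hx
      exact hsucc c hc.2 x hx.2
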